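/- arXiv:2201.12746 — 2 statements merged into one kernel-verified Lean document; each statement's English description precedes it below -/
import Mathlib

section
/- Let M ≥ 1 be an integer and let 𝒟 be a probability distribution on ℕ supported on {0,1,…,M}. For every n ≥ 1 and every random variable X on {0,1}^n, with Y = RC_𝒟 X (channel randomness independent of X), one has I(X; TRIM Y) ≤ I(X; Y) ≤ I(X; TRIM Y) + 8 log₂(n+1) + 3 log₂(Mn+2). In particular |I(X; RC_𝒟 X) − I(X; TRC_𝒟 X)| = O(log n) uniformly in X when M is fixed. -/
open MeasureTheory ProbabilityTheory Filter Real
open scoped ENNReal NNReal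

/-- Shannon entropy (in bits) of a discrete random variable `X`. -/
noncomputable def entropy {Ω S : Type*} [MeasurableSpace Ω] (μ : Measure Ω) (X : Ω → S) : ℝ :=
  ∑' s : S, -((μ (X ⁻¹' {s})).toReal * Real.logb 2 (μ (X ⁻¹' {s})).toReal)

/-- Mutual information (in bits) `I(X;Y) = H(X) + H(Y) - H(X,Y)`. -/
noncomputable def mutualInfo' {Ω S T : Type*} [MeasurableSpace Ω] (μ : Measure Ω)
    (X : Ω → S) (Y : Ω → T) : ℝ :=
  entropy μ X + entropy μ Y - entropy μ (fun ω => (X ω, Y ω))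

/-- Output of the `𝒟`-repeat channel on input `x` with repetition counts `ω`. -/
def repeatOut {n : ℕ} (x : Fin n → Bool) (ω : Fin n → ℕ) : List Bool :=
  (List.finRange n).flatMap fun i => List.replicate (ω i) (x i)

/-- TRIM: delete the maximal all-zero (`false`) prefix and suffix. -/
def trim (l : List Bool) : List Bool :=
  ((l.dropWhile (· == false)).reverse.dropWhile (· == false)).reverse

/-- The distribution of the channel randomness: i.i.d. repetition counts `ωᵢ ~ 𝒟`. -/
noncomputable def rcNoise (D : PMF ℕ) (n : ℕ) : Measure (Fin n → ℕ) :=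
  Measure.pi fun _ => D.toMeasure

/-- Joint distribution of `(X, ω)` when `X ~ p` is independent of the channel randomness. -/
noncomputable def rcJoint (D : PMF ℕ) {n : ℕ} (p : PMF (Fin n → Bool)) :
    Measure ((Fin n → Bool) × (Fin n → ℕ)) :=
  p.toMeasure.prod (rcNoise D n)

/-- `sup_X I(X; f(RC_𝒟 X))` over all input distributions on `{0,1}^n`
(`f = id` gives `RC_𝒟`, `f = trim` gives `TRC_𝒟`). -/
noncomputable def rcSup (D : PMF ℕ) (f : List Bool → List Bool) (n : ℕ) : ℝ :=
  ⨆ p : PMF (Fin n → Bool),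
    mutualInfo' (rcJoint D p) Prod.fst fun q => f (repeatOut q.1 q.2)

/-- `𝒟` has finite first and second moments. -/
def SquareIntegrableD (D : PMF ℕ) : Prop :=
  (∑' k : ℕ, (k : ℝ≥0∞) * D k) ≠ ⊤ ∧ (∑' k : ℕ, (k : ℝ≥0∞) ^ 2 * D k) ≠ ⊤


/-- φ(t) = -t log₂ t -/
noncomputable def phi (t : ℝ) : ℝ := -(t * Real.logb 2 t)

lemma phi_zero : phi 0 = 0 := by simp [phi]

/-- Gibbs inequality on a finite set. -/
lemma gibbs {S : Type*} (s : Finset S) (p q : S → ℝ)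
    (hp0 : ∀ a ∈ s, 0 ≤ p a) (hq0 : ∀ a ∈ s, 0 ≤ q a)
    (hpq : ∀ a ∈ s, 0 < p a → 0 < q a)
    (hp1 : ∑ a ∈ s, p a = 1) (hq1 : ∑ a ∈ s, q a ≤ 1) :
    ∑ a ∈ s, p a * Real.logb 2 (q a) ≤ ∑ a ∈ s, p a * Real.logb 2 (p a) := by
  have hlog2 : (0:ℝ) < Real.log 2 := Real.log_pos (by norm_num)
  rw [← sub_nonpos, ← Finset.sum_sub_distrib]
  have key : ∀ a ∈ s, p a * Real.logb 2 (q a) - p a * Real.logb 2 (p a)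
      ≤ (q a - p a) / Real.log 2 := by
    intro a ha
    rcases eq_or_lt_of_le (hp0 a ha) with h0 | h0
    · rw [← h0]; simp
      exact div_nonneg (hq0 a ha) (le_of_lt hlog2)
    · have hq : 0 < q a := hpq a ha h0
      rw [← mul_sub, Real.logb, Real.logb, div_sub_div_same, ← Real.log_div (ne_of_gt hq) (ne_of_gt h0)]
      rw [← mul_div_assoc, div_le_div_iff_of_pos_right hlog2]
      have := Real.log_le_sub_one_of_pos (show 0 < q a / p a by positivity)
      calc p a * Real.log (q a / p a) ≤ p a * (q a / p a - 1) :=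
            mul_le_mul_of_nonneg_left this (le_of_lt h0)
        _ = q a - p a := by field_simp
  calc ∑ a ∈ s, (p a * Real.logb 2 (q a) - p a * Real.logb 2 (p a))
      ≤ ∑ a ∈ s, (q a - p a) / Real.log 2 := Finset.sum_le_sum key
    _ = (∑ a ∈ s, q a - 1) / Real.log 2 := by
        rw [← Finset.sum_div, Finset.sum_sub_distrib, hp1]
    _ ≤ 0 := div_nonpos_of_nonpos_of_nonneg (by linarith) (le_of_lt hlog2)

section Ent
open scoped Classical
variable {Ω : Type*} (G : Finset Ω) (w : Ω → ℝ)

open scoped Classical in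
/-- mass of `V = s` under weights `w` on `G`. -/
noncomputable def mass {S : Type*} (V : Ω → S) (s : S) : ℝ :=
  ∑ a ∈ G.filter (fun a => V a = s), w a

open scoped Classical in
/-- entropy of `V` under weights `w` on `G`. -/
noncomputable def ent {S : Type*} (V : Ω → S) : ℝ :=
  ∑ b ∈ G.image V, phi (mass G w V b)

variable (hw0 : ∀ a ∈ G, 0 ≤ w a) (hw1 : ∑ a ∈ G, w a = 1)

include hw0 in
lemma mass_nonneg {S : Type*} (V : Ω → S) (s : S) : 0 ≤ mass G w V s :=
  Finset.sum_nonneg fun a ha => hw0 a (Finset.mem_filter.1 ha).1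

include hw0 in
lemma mass_le {S T : Type*} (V : Ω → S) (W : Ω → T) (s : S) (t : T)
    (h : ∀ a ∈ G, V a = s → W a = t) : mass G w V s ≤ mass G w W t := by
  classical
  apply Finset.sum_le_sum_of_subset_of_nonneg
  · intro a ha
    rw [Finset.mem_filter] at ha ⊢
    exact ⟨ha.1, h a ha.1 ha.2⟩
  · intro a ha _; exact hw0 a (Finset.mem_filter.1 ha).1

/-- grouping identity. -/
lemma grp {S : Type*} (V : Ω → S) (h : S → ℝ) :
    ∑ b ∈ G.image V, mass G w V b * h b = ∑ a ∈ G, w a * h (V a) := by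
  classical
  rw [← Finset.sum_fiberwise_of_maps_to (fun a ha => Finset.mem_image_of_mem V ha)
    (fun a => w a * h (V a))]
  apply Finset.sum_congr rfl
  intro b _
  rw [mass, Finset.sum_mul]
  apply Finset.sum_congr rfl
  intro a ha
  rw [(Finset.mem_filter.1 ha).2]

include hw1 in
lemma mass_sum {S : Type*} (V : Ω → S) : ∑ b ∈ G.image V, mass G w V b = 1 := by
  have := grp G w V (fun _ => 1)
  simpa [hw1] using this

lemma ent_eq {S : Type*} (V : Ω → S) :
    ent G w V = -∑ a ∈ G, w a * Real.logb 2 (mass G w V (V a)) := by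
  classical
  rw [← grp G w V (fun b => Real.logb 2 (mass G w V b)), ent, ← Finset.sum_neg_distrib]
  apply Finset.sum_congr rfl
  intro b _; rw [phi]

include hw0 in
/-- grouping decreases entropy. -/
lemma ent_comp_le {S T : Type*} (V : Ω → S) (g : S → T) :
    ent G w (fun a => g (V a)) ≤ ent G w V := by
  classical
  have himg : G.image (fun a => g (V a)) = (G.image V).image g := by
    rw [Finset.image_image]; rfl
  have hfib : ∀ t, mass G w (fun a => g (V a)) t
      = ∑ b ∈ (G.image V).filter (fun b => g b = t), mass G w V b := by
    intro t
    rw [mass]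
    rw [← Finset.sum_fiberwise_of_maps_to (g := V)
      (t := (G.image V).filter (fun b => g b = t)) ?hmap w]
    · apply Finset.sum_congr rfl
      intro b hb
      rw [mass]
      apply Finset.sum_congr _ (fun _ _ => rfl)
      ext a
      simp only [Finset.mem_filter]
      constructor
      · rintro ⟨⟨ha, hgt⟩, hVab⟩; exact ⟨ha, hVab⟩
      · rintro ⟨ha, hVab⟩
        refine ⟨⟨ha, ?_⟩, hVab⟩
        rw [Finset.mem_filter] at hb
        rw [hVab]; exact hb.2
    · intro a ha
      rw [Finset.mem_filter] at ha ⊢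
      exact ⟨Finset.mem_image_of_mem V ha.1, ha.2⟩
  rw [ent, himg, ent]
  calc ∑ t ∈ (G.image V).image g, phi (mass G w (fun a => g (V a)) t)
      ≤ ∑ t ∈ (G.image V).image g, ∑ b ∈ (G.image V).filter (fun b => g b = t),
          phi (mass G w V b) := by
        apply Finset.sum_le_sum
        intro t _
        rw [hfib]
        -- phi of a sum ≤ sum of phi
        set s' := (G.image V).filter (fun b => g b = t)
        have hx : ∀ b ∈ s', 0 ≤ mass G w V b := fun b _ => mass_nonneg G w hw0 V b
        have hsum : ∀ b ∈ s', mass G w V b ≤ ∑ c ∈ s', mass G w V c :=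
          fun b hb => Finset.single_le_sum hx hb
        rw [phi, neg_le, ← Finset.sum_neg_distrib]
        simp only [phi, neg_neg]
        rw [Finset.sum_mul]
        apply Finset.sum_le_sum
        intro b hb
        rcases eq_or_lt_of_le (hx b hb) with h0 | h0
        · rw [← h0]; simp
        · apply mul_le_mul_of_nonneg_left _ (le_of_lt (h0))
          apply Real.logb_le_logb_of_le (by norm_num) h0 (hsum b hb)
    _ = ∑ b ∈ G.image V, phi (mass G w V b) :=
        Finset.sum_fiberwise_of_maps_to (fun b hb => Finset.mem_image_of_mem g hb) _

end Ent

section Ent2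
open scoped Classical
variable {Ω : Type*} (G : Finset Ω) (w : Ω → ℝ)
variable (hw0 : ∀ a ∈ G, 0 ≤ w a) (hw1 : ∑ a ∈ G, w a = 1)

lemma mass_eq_zero {S : Type*} (V : Ω → S) (s : S) (h : ∀ a ∈ G, V a ≠ s) :
    mass G w V s = 0 := by
  rw [mass, Finset.filter_eq_empty_iff.2 h, Finset.sum_empty]

lemma grp' {S : Type*} (V : Ω → S) (h : S → ℝ) {s' : Finset S} (hs : ∀ a ∈ G, V a ∈ s') :
    ∑ b ∈ s', mass G w V b * h b = ∑ a ∈ G, w a * h (V a) := by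
  rw [← grp G w V h]
  symm
  apply Finset.sum_subset
  · intro b hb
    rw [Finset.mem_image] at hb
    obtain ⟨a, ha, rfl⟩ := hb
    exact hs a ha
  · intro b _ hb
    rw [Finset.mem_image] at hb
    push_neg at hb
    rw [mass_eq_zero G w V b hb, zero_mul]

include hw1 in
lemma mass_sum_big {S : Type*} (V : Ω → S) {s' : Finset S} (hs : ∀ a ∈ G, V a ∈ s') :
    ∑ b ∈ s', mass G w V b = 1 := by
  have := grp' G w V (fun _ => 1) hs
  simpa [hw1] using this

include hw0 in
lemma sum_mass_le {σ S T : Type*} (t : Finset σ) (e : σ → S) (he : Set.InjOn e ↑t)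
    (V : Ω → S) (W : Ω → T) (c : T) (h : ∀ a ∈ G, ∀ u ∈ t, V a = e u → W a = c) :
    ∑ u ∈ t, mass G w V (e u) ≤ mass G w W c := by
  have hdisj : ∀ u ∈ t, ∀ v ∈ t, u ≠ v →
      Disjoint (G.filter (fun a => V a = e u)) (G.filter (fun a => V a = e v)) := by
    intro u hu v hv huv
    apply Finset.disjoint_left.2
    intro a ha hb
    rw [Finset.mem_filter] at ha hb
    exact huv (he hu hv (ha.2.symm.trans hb.2))
  rw [show (∑ u ∈ t, mass G w V (e u))
      = ∑ a ∈ t.biUnion (fun u => G.filter (fun a => V a = e u)), w a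
    from (Finset.sum_biUnion hdisj).symm]
  apply Finset.sum_le_sum_of_subset_of_nonneg
  · intro a ha
    rw [Finset.mem_biUnion] at ha
    obtain ⟨u, hu, ha⟩ := ha
    rw [Finset.mem_filter] at ha ⊢
    exact ⟨ha.1, h a ha.1 u hu ha.2⟩
  · intro a ha _; exact hw0 a (Finset.mem_filter.1 ha).1

include hw0 hw1 in
/-- Data processing inequality (deterministic postprocessing). -/
lemma dpi {S T U : Type*} (X : Ω → S) (Y : Ω → T) (g : T → U) :
    ent G w (fun a => g (Y a)) - ent G w (fun a => (X a, g (Y a))) ≤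
      ent G w Y - ent G w (fun a => (X a, Y a)) := by
  set P : Ω → S × T := fun a => (X a, Y a) with hP
  set XgY : Ω → S × U := fun a => (X a, g (Y a)) with hXgY
  set gY : Ω → U := fun a => g (Y a) with hgY
  set sP : Finset (S × T) := (G.image X) ×ˢ (G.image Y) with hsP
  have hPsub : ∀ a ∈ G, P a ∈ sP := fun a ha =>
    Finset.mem_product.2 ⟨Finset.mem_image_of_mem X ha, Finset.mem_image_of_mem Y ha⟩
  set q : S × T → ℝ := fun b =>
    mass G w Y b.2 * mass G w XgY (b.1, g b.2) / mass G w gY (g b.2) with hq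
  have hmY : ∀ b : S × T, mass G w P b ≤ mass G w Y b.2 := fun b =>
    mass_le G w hw0 P Y b b.2 (fun a _ hv => by rw [← hv])
  have hmXgY : ∀ b : S × T, mass G w P b ≤ mass G w XgY (b.1, g b.2) := fun b =>
    mass_le G w hw0 P XgY b (b.1, g b.2) (fun a _ hv => by rw [← hv])
  have hmgY : ∀ u : T, mass G w Y u ≤ mass G w gY (g u) := fun u =>
    mass_le G w hw0 Y gY u (g u) (fun a _ hv => by rw [hgY]; simp only [hv])
  have key := gibbs sP (mass G w P) q
    (fun b _ => mass_nonneg G w hw0 P b)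
    (fun b _ => by
      apply div_nonneg _ (mass_nonneg G w hw0 gY _)
      exact mul_nonneg (mass_nonneg G w hw0 Y _) (mass_nonneg G w hw0 XgY _))
    (fun b _ hb => by
      have h1 : 0 < mass G w Y b.2 := lt_of_lt_of_le hb (hmY b)
      have h2 : 0 < mass G w XgY (b.1, g b.2) := lt_of_lt_of_le hb (hmXgY b)
      have h3 : 0 < mass G w gY (g b.2) := lt_of_lt_of_le h1 (hmgY b.2)
      positivity)
    (mass_sum_big G w hw1 P hPsub)
    (by
      rw [hsP, Finset.sum_product_right]
      calc ∑ y ∈ G.image Y, ∑ x ∈ G.image X, q (x, y)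
          ≤ ∑ y ∈ G.image Y, mass G w Y y := by
            apply Finset.sum_le_sum
            intro y _
            have hfac : ∀ x, q (x, y)
                = mass G w Y y * mass G w XgY (x, g y) / mass G w gY (g y) := fun x => rfl
            simp only [hfac]
            have hSx : ∑ x ∈ G.image X, mass G w XgY (x, g y) ≤ mass G w gY (g y) := by
              apply sum_mass_le G w hw0 (G.image X) (fun x => (x, g y))
                (fun a _ b _ hab => congrArg Prod.fst hab) XgY gY (g y)
              intro a _ u _ hu
              rw [hgY]
              exact (congrArg Prod.snd hu : _)
            have hSx0 : 0 ≤ ∑ x ∈ G.image X, mass G w XgY (x, g y) :=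
              Finset.sum_nonneg fun x _ => mass_nonneg G w hw0 XgY _
            rw [← Finset.sum_div, ← Finset.mul_sum]
            rcases eq_or_lt_of_le (mass_nonneg G w hw0 gY (g y)) with hd | hd
            · rw [← hd, div_zero]
              exact mass_nonneg G w hw0 Y y
            · rw [div_le_iff₀ hd]
              calc mass G w Y y * ∑ x ∈ G.image X, mass G w XgY (x, g y)
                  ≤ mass G w Y y * mass G w gY (g y) :=
                    mul_le_mul_of_nonneg_left hSx (mass_nonneg G w hw0 Y y)
                _ = mass G w Y y * mass G w gY (g y) := rfl
        _ = 1 := mass_sum G w hw1 Y)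
  -- rewrite both sides of `key`
  have hR : ∑ b ∈ sP, mass G w P b * Real.logb 2 (mass G w P b) = -ent G w P := by
    rw [grp' G w P (fun b => Real.logb 2 (mass G w P b)) hPsub, ent_eq, neg_neg]
  have hsplit : ∀ b ∈ sP, mass G w P b * Real.logb 2 (q b)
      = mass G w P b * Real.logb 2 (mass G w Y b.2)
        + mass G w P b * Real.logb 2 (mass G w XgY (b.1, g b.2))
        - mass G w P b * Real.logb 2 (mass G w gY (g b.2)) := by
    intro b _
    rcases eq_or_lt_of_le (mass_nonneg G w hw0 P b) with h0 | h0
    · rw [← h0]; ring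
    · have h1 : 0 < mass G w Y b.2 := lt_of_lt_of_le h0 (hmY b)
      have h2 : 0 < mass G w XgY (b.1, g b.2) := lt_of_lt_of_le h0 (hmXgY b)
      have h3 : 0 < mass G w gY (g b.2) := lt_of_lt_of_le h1 (hmgY b.2)
      rw [hq]
      rw [Real.logb_div (by positivity) (ne_of_gt h3),
          Real.logb_mul (ne_of_gt h1) (ne_of_gt h2)]
      ring
  have hL : ∑ b ∈ sP, mass G w P b * Real.logb 2 (q b)
      = -ent G w Y - ent G w XgY + ent G w gY := by
    rw [Finset.sum_congr rfl hsplit]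
    rw [Finset.sum_sub_distrib, Finset.sum_add_distrib]
    rw [grp' G w P (fun b => Real.logb 2 (mass G w Y b.2)) hPsub]
    rw [grp' G w P (fun b => Real.logb 2 (mass G w XgY (b.1, g b.2))) hPsub]
    rw [grp' G w P (fun b => Real.logb 2 (mass G w gY (g b.2))) hPsub]
    rw [ent_eq G w Y, ent_eq G w XgY, ent_eq G w gY]
    ring
  rw [hL, hR] at key
  linarith

include hw0 hw1 in
/-- Subadditivity of entropy. -/
lemma ent_pair_le {S T : Type*} (X : Ω → S) (Y : Ω → T) :
    ent G w (fun a => (X a, Y a)) ≤ ent G w X + ent G w Y := by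
  set P : Ω → S × T := fun a => (X a, Y a) with hP
  set sP : Finset (S × T) := (G.image X) ×ˢ (G.image Y) with hsP
  have hPsub : ∀ a ∈ G, P a ∈ sP := fun a ha =>
    Finset.mem_product.2 ⟨Finset.mem_image_of_mem X ha, Finset.mem_image_of_mem Y ha⟩
  set q : S × T → ℝ := fun b => mass G w X b.1 * mass G w Y b.2 with hq
  have hmX : ∀ b : S × T, mass G w P b ≤ mass G w X b.1 := fun b =>
    mass_le G w hw0 P X b b.1 (fun a _ hv => by rw [← hv])
  have hmY : ∀ b : S × T, mass G w P b ≤ mass G w Y b.2 := fun b =>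
    mass_le G w hw0 P Y b b.2 (fun a _ hv => by rw [← hv])
  have key := gibbs sP (mass G w P) q
    (fun b _ => mass_nonneg G w hw0 P b)
    (fun b _ => mul_nonneg (mass_nonneg G w hw0 X _) (mass_nonneg G w hw0 Y _))
    (fun b _ hb => mul_pos (lt_of_lt_of_le hb (hmX b)) (lt_of_lt_of_le hb (hmY b)))
    (mass_sum_big G w hw1 P hPsub)
    (by
      rw [hsP, Finset.sum_product]
      calc ∑ x ∈ G.image X, ∑ y ∈ G.image Y, q (x, y)
          = (∑ x ∈ G.image X, mass G w X x) * (∑ y ∈ G.image Y, mass G w Y y) := by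
            rw [Finset.sum_mul_sum]
        _ ≤ 1 := by rw [mass_sum G w hw1 X, mass_sum G w hw1 Y]; norm_num)
  have hR : ∑ b ∈ sP, mass G w P b * Real.logb 2 (mass G w P b) = -ent G w P := by
    rw [grp' G w P (fun b => Real.logb 2 (mass G w P b)) hPsub, ent_eq, neg_neg]
  have hsplit : ∀ b ∈ sP, mass G w P b * Real.logb 2 (q b)
      = mass G w P b * Real.logb 2 (mass G w X b.1)
        + mass G w P b * Real.logb 2 (mass G w Y b.2) := by
    intro b _
    rcases eq_or_lt_of_le (mass_nonneg G w hw0 P b) with h0 | h0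
    · rw [← h0]; ring
    · have h1 : 0 < mass G w X b.1 := lt_of_lt_of_le h0 (hmX b)
      have h2 : 0 < mass G w Y b.2 := lt_of_lt_of_le h0 (hmY b)
      rw [hq, Real.logb_mul (ne_of_gt h1) (ne_of_gt h2)]
      ring
  have hL : ∑ b ∈ sP, mass G w P b * Real.logb 2 (q b) = -ent G w X - ent G w Y := by
    rw [Finset.sum_congr rfl hsplit, Finset.sum_add_distrib]
    rw [grp' G w P (fun b => Real.logb 2 (mass G w X b.1)) hPsub]
    rw [grp' G w P (fun b => Real.logb 2 (mass G w Y b.2)) hPsub]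
    rw [ent_eq G w X, ent_eq G w Y]
    ring
  rw [hL, hR] at key
  linarith

include hw0 hw1 in
/-- Entropy is at most log of the number of values. -/
lemma ent_le_logb_card {S : Type*} (V : Ω → S) (N : ℕ) (hN : 0 < N)
    (hcard : (G.image V).card ≤ N) : ent G w V ≤ Real.logb 2 N := by
  have hN' : (0:ℝ) < N := by exact_mod_cast hN
  have key := gibbs (G.image V) (mass G w V) (fun _ => 1 / N)
    (fun b _ => mass_nonneg G w hw0 V b)
    (fun b _ => by positivity)
    (fun b _ _ => by positivity)
    (mass_sum G w hw1 V)
    (by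
      rw [Finset.sum_const, nsmul_eq_mul]
      rw [mul_one_div, div_le_one hN']
      exact_mod_cast hcard)
  have hL : ∑ b ∈ G.image V, mass G w V b * Real.logb 2 ((fun _ => 1 / (N:ℝ)) b)
      = -Real.logb 2 N := by
    simp only []
    rw [← Finset.sum_mul, mass_sum G w hw1 V, one_mul, one_div,
      Real.logb_inv]
  have hR : ∑ b ∈ G.image V, mass G w V b * Real.logb 2 (mass G w V b) = -ent G w V := by
    rw [grp G w V (fun b => Real.logb 2 (mass G w V b)), ent_eq, neg_neg]
  rw [hL, hR] at key
  linarith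

end Ent2

-- ## List encoding/decoding lemmas
lemma takeWhile_false_eq_replicate (l : List Bool) :
    l.takeWhile (· == false) = List.replicate (l.takeWhile (· == false)).length false := by
  rw [List.eq_replicate_iff]
  refine ⟨rfl, fun b hb => ?_⟩
  have := List.mem_takeWhile_imp hb
  simpa using this

lemma trim_decomp (l : List Bool) :
    List.replicate (l.takeWhile (· == false)).length false ++ trim l ++
      List.replicate (l.length - ((l.takeWhile (· == false)).length + (trim l).length)) false
      = l := by
  set l1 := l.dropWhile (· == false) with hl1
  have h1 : l = List.replicate (l.takeWhile (· == false)).length false ++ l1 := by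
    conv_lhs => rw [← List.takeWhile_append_dropWhile (p := (· == false)) (l := l)]
    rw [← takeWhile_false_eq_replicate]
  have h2 : l1 = trim l ++ List.replicate (l1.reverse.takeWhile (· == false)).length false := by
    conv_lhs => rw [← l1.reverse_reverse,
      ← List.takeWhile_append_dropWhile (p := (· == false)) (l := l1.reverse)]
    rw [List.reverse_append]
    conv_lhs => rw [takeWhile_false_eq_replicate l1.reverse]
    rw [List.reverse_replicate]
    rfl
  have hlen : l.length = (l.takeWhile (· == false)).length + ((trim l).length
      + (l1.reverse.takeWhile (· == false)).length) := by
    conv_lhs => rw [h1, h2]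
    simp [List.length_append]
  have : l.length - ((l.takeWhile (· == false)).length + (trim l).length)
      = (l1.reverse.takeWhile (· == false)).length := by omega
  rw [this, List.append_assoc, ← h2, ← h1]

lemma length_repeatOut {n : ℕ} (x : Fin n → Bool) (ω : Fin n → ℕ) :
    (repeatOut x ω).length = ∑ i : Fin n, ω i := by
  rw [repeatOut, List.length_flatMap]
  simp only [Function.comp_def, List.length_replicate]
  rw [Fin.sum_univ_def]

/-- Encoding of a list by (trimmed core, (number of leading falses, length)). -/
def encL (l : List Bool) : List Bool × (ℕ × ℕ) :=
  (trim l, ((l.takeWhile (· == false)).length, l.length))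

/-- Decoding. -/
def decL (z : List Bool × (ℕ × ℕ)) : List Bool :=
  List.replicate z.2.1 false ++ z.1 ++ List.replicate (z.2.2 - (z.2.1 + z.1.length)) false

lemma decL_encL (l : List Bool) : decL (encL l) = l := trim_decomp l

-- ## Measure-theoretic bridge
section Bridge
open MeasureTheory
open scoped Classical

variable (M : ℕ) {n : ℕ} (D : PMF ℕ) (p : PMF (Fin n → Bool))

/-- The finite support set. -/
def bigG (M n : ℕ) : Finset ((Fin n → Bool) × (Fin n → ℕ)) :=
  Finset.univ ×ˢ Fintype.piFinset (fun _ : Fin n => Finset.range (M + 1))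

lemma meas_all (s : Set ((Fin n → Bool) × (Fin n → ℕ))) : MeasurableSet s := by
  rw [← Set.biUnion_of_singleton s]
  exact MeasurableSet.biUnion (Set.to_countable s)
    (fun a _ => measurableSet_singleton a)

instance : IsProbabilityMeasure (rcNoise D n) := by
  rw [rcNoise]; infer_instance

instance : IsProbabilityMeasure (rcJoint D p) := by
  rw [rcJoint]; infer_instance

lemma rcJoint_singleton (x : Fin n → Bool) (ω : Fin n → ℕ) :
    rcJoint D p {(x, ω)} = p x * ∏ i, D (ω i) := by
  have h1 : ({(x, ω)} : Set ((Fin n → Bool) × (Fin n → ℕ))) = {x} ×ˢ {ω} := by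
    ext a; simp [Prod.ext_iff]
  rw [rcJoint, h1, Measure.prod_prod]
  have h2 : ({ω} : Set (Fin n → ℕ)) = Set.pi Set.univ (fun i => {ω i}) := by
    ext a; simp [funext_iff]
  rw [rcNoise, h2, Measure.pi_pi]
  rw [PMF.toMeasure_apply_singleton _ _ (measurableSet_singleton x)]
  congr 1
  exact Finset.prod_congr rfl fun i _ =>
    PMF.toMeasure_apply_singleton _ _ (measurableSet_singleton (ω i))

lemma meas_finset (μ : Measure ((Fin n → Bool) × (Fin n → ℕ)))
    (t : Finset ((Fin n → Bool) × (Fin n → ℕ))) :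
    μ ↑t = ∑ a ∈ t, μ {a} := by
  have : (↑t : Set ((Fin n → Bool) × (Fin n → ℕ))) = ⋃ a ∈ t, {a} := by ext a; simp
  rw [this, measure_biUnion_finset ?hd fun a _ => meas_all _]
  intro a _ b _ hab
  simp only [Function.onFun, Set.disjoint_singleton]
  exact hab

variable (hsupp : ∀ k : ℕ, M < k → D k = 0)

include hsupp in
lemma null_outside : ∀ a ∉ bigG M n, rcJoint D p {a} = 0 := by
  intro a ha
  obtain ⟨x, ω⟩ := a
  simp only [bigG, Finset.mem_product, Finset.mem_univ, true_and, Fintype.mem_piFinset,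
    Finset.mem_range, not_forall, not_lt] at ha
  obtain ⟨i, hi⟩ := ha
  rw [rcJoint_singleton]
  rw [Finset.prod_eq_zero (Finset.mem_univ i) (hsupp (ω i) (by omega)), mul_zero]

include hsupp in
lemma measure_eq_sum (A : Set ((Fin n → Bool) × (Fin n → ℕ))) :
    rcJoint D p A = ∑ a ∈ (bigG M n).filter (fun a => a ∈ A), rcJoint D p {a} := by
  have h1 : rcJoint D p (A \ ↑(bigG M n)) = 0 := by
    have he : A \ ↑(bigG M n) = ⋃ a ∈ A \ ↑(bigG M n), {a} := by ext a; simp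
    rw [he, measure_biUnion_null_iff (Set.to_countable _)]
    intro a ha
    exact null_outside M D p hsupp a (fun hc => ha.2 hc)
  have h2 : rcJoint D p A = rcJoint D p (A ∩ ↑(bigG M n)) := by
    rw [← measure_inter_add_diff A (meas_all ↑(bigG M n)), h1, add_zero]
  have h3 : A ∩ ↑(bigG M n) = ↑((bigG M n).filter (fun a => a ∈ A)) := by
    ext a; simp [and_comm]
  rw [h2, h3, meas_finset]

/-- The weight function. -/
noncomputable def wgt : ((Fin n → Bool) × (Fin n → ℕ)) → ℝ :=
  fun a => ((rcJoint D p) {a}).toReal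

lemma wgt_nonneg : ∀ a ∈ bigG M n, 0 ≤ wgt D p a :=
  fun _ _ => ENNReal.toReal_nonneg

include hsupp in
lemma wgt_sum : ∑ a ∈ bigG M n, wgt D p a = 1 := by
  have h0 := measure_eq_sum M D p hsupp Set.univ
  rw [measure_univ] at h0
  simp only [Set.mem_univ, Finset.filter_true] at h0
  simp only [wgt]
  rw [← ENNReal.toReal_sum (fun a _ => measure_ne_top _ _), ← h0]
  rfl

include hsupp in
lemma mass_bridge {S : Type*} (V : ((Fin n → Bool) × (Fin n → ℕ)) → S) (s : S) :
    ((rcJoint D p) (V ⁻¹' {s})).toReal = mass (bigG M n) (wgt D p) V s := by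
  rw [measure_eq_sum M D p hsupp (V ⁻¹' {s}), mass,
    ENNReal.toReal_sum (fun a _ => measure_ne_top _ _)]
  apply Finset.sum_congr
  · apply Finset.filter_congr
    intro a _
    simp [Set.mem_preimage]
  · intro a _; rfl

include hsupp in
lemma entropy_bridge {S : Type*} (V : ((Fin n → Bool) × (Fin n → ℕ)) → S) :
    entropy (rcJoint D p) V = ent (bigG M n) (wgt D p) V := by
  rw [entropy, ent]
  rw [tsum_eq_sum (s := (bigG M n).image V) ?h0]
  · apply Finset.sum_congr rfl
    intro b _
    rw [phi, mass_bridge M D p hsupp V b]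
  · intro s hs
    have : mass (bigG M n) (wgt D p) V s = 0 := by
      apply mass_eq_zero
      intro a ha hv
      exact hs (Finset.mem_image.mpr ⟨a, ha, hv⟩)
    rw [mass_bridge M D p hsupp V s, this]
    simp

include hsupp in
lemma mutualInfo_bridge {S T : Type*} (X : ((Fin n → Bool) × (Fin n → ℕ)) → S)
    (Y : ((Fin n → Bool) × (Fin n → ℕ)) → T) :
    mutualInfo' (rcJoint D p) X Y
      = ent (bigG M n) (wgt D p) X + ent (bigG M n) (wgt D p) Y
        - ent (bigG M n) (wgt D p) (fun a => (X a, Y a)) := by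
  rw [mutualInfo', entropy_bridge M D p hsupp X, entropy_bridge M D p hsupp Y,
    entropy_bridge M D p hsupp (fun a => (X a, Y a))]

end Bridge


-- FINALTHM
/-- If `𝒟` is supported on `{0,…,M}` with `M ≥ 1`, then for every `n ≥ 1`
and every input distribution `p` on `{0,1}^n` (channel randomness independent of the input),
with `Y = RC_𝒟 X`:
`I(X; TRIM Y) ≤ I(X; Y) ≤ I(X; TRIM Y) + 8 log₂(n+1) + 3 log₂(Mn+2)`. -/
theorem trimming_mutual_information_log_bound
    (M : ℕ) (hM : 1 ≤ M) (D : PMF ℕ) (hsupp : ∀ k : ℕ, M < k → D k = 0)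
    (n : ℕ) (hn : 1 ≤ n) (p : PMF (Fin n → Bool)) :
    mutualInfo' (rcJoint D p) Prod.fst (fun q => trim (repeatOut q.1 q.2)) ≤
      mutualInfo' (rcJoint D p) Prod.fst (fun q => repeatOut q.1 q.2) ∧
    mutualInfo' (rcJoint D p) Prod.fst (fun q => repeatOut q.1 q.2) ≤
      mutualInfo' (rcJoint D p) Prod.fst (fun q => trim (repeatOut q.1 q.2))
        + 8 * Real.logb 2 (n + 1) + 3 * Real.logb 2 (M * n + 2) := by
  classical
  have hw0 := wgt_nonneg M D p
  have hw1 := wgt_sum M D p hsupp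
  constructor
  · rw [mutualInfo_bridge M D p hsupp, mutualInfo_bridge M D p hsupp]
    have h := dpi (bigG M n) (wgt D p) hw0 hw1
      (Prod.fst : ((Fin n → Bool) × (Fin n → ℕ)) → (Fin n → Bool))
      (fun q => repeatOut q.1 q.2) trim
    beta_reduce at h ⊢
    linarith
  · rw [mutualInfo_bridge M D p hsupp, mutualInfo_bridge M D p hsupp]
    have h1 := dpi (bigG M n) (wgt D p) hw0 hw1
      (Prod.fst : ((Fin n → Bool) × (Fin n → ℕ)) → (Fin n → Bool))
      (fun q => encL (repeatOut q.1 q.2)) decL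
    simp only [decL_encL] at h1
    have h2 : ent (bigG M n) (wgt D p) (fun q => encL (repeatOut q.1 q.2))
        ≤ ent (bigG M n) (wgt D p) (fun q => trim (repeatOut q.1 q.2))
          + ent (bigG M n) (wgt D p)
            (fun q => (((repeatOut q.1 q.2).takeWhile (· == false)).length,
              (repeatOut q.1 q.2).length)) :=
      ent_pair_le (bigG M n) (wgt D p) hw0 hw1
        (fun q => trim (repeatOut q.1 q.2))
        (fun q => (((repeatOut q.1 q.2).takeWhile (· == false)).length,
          (repeatOut q.1 q.2).length))
    have h3 : ent (bigG M n) (wgt D p) (fun a => (a.1, trim (repeatOut a.1 a.2)))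
        ≤ ent (bigG M n) (wgt D p) (fun a => (a.1, encL (repeatOut a.1 a.2))) :=
      ent_comp_le (bigG M n) (wgt D p) hw0
        (fun a => (a.1, encL (repeatOut a.1 a.2)))
        (fun z => (z.1, z.2.1))
    have h4 := ent_le_logb_card (bigG M n) (wgt D p) hw0 hw1
      (fun q => (((repeatOut q.1 q.2).takeWhile (· == false)).length,
        (repeatOut q.1 q.2).length)) ((M * n + 1) ^ 2) (by positivity) ?hcard
    case hcard =>
      have hpc : ((Finset.range (M * n + 1)) ×ˢ (Finset.range (M * n + 1))).card
          = (M * n + 1) ^ 2 := by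
        rw [Finset.card_product, Finset.card_range]; ring
      rw [← hpc]
      apply Finset.card_le_card
      intro b hb
      simp only [Finset.mem_image] at hb
      obtain ⟨a, ha, rfl⟩ := hb
      have hmem : ∀ i, a.2 i ≤ M := by
        intro i
        have := (Finset.mem_product.1 ha).2
        rw [Fintype.mem_piFinset] at this
        have := this i
        rw [Finset.mem_range] at this
        omega
      have hlen : (repeatOut a.1 a.2).length ≤ M * n := by
        rw [length_repeatOut]
        calc ∑ i, a.2 i ≤ ∑ _i : Fin n, M := Finset.sum_le_sum (fun i _ => hmem i)
          _ = M * n := by rw [Finset.sum_const, Finset.card_univ, Fintype.card_fin,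
                smul_eq_mul, mul_comm]
      have hlead : ((repeatOut a.1 a.2).takeWhile (· == false)).length
          ≤ (repeatOut a.1 a.2).length := (List.takeWhile_sublist _).length_le
      rw [Finset.mem_product, Finset.mem_range, Finset.mem_range]
      constructor <;> omega
    have hMn1 : (1:ℝ) ≤ (M:ℝ) * n + 1 := by
      have : (0:ℝ) ≤ (M:ℝ) * n := by positivity
      linarith
    have hcast : Real.logb 2 ((((M * n + 1) ^ 2 : ℕ) : ℝ))
        ≤ 3 * Real.logb 2 ((M:ℝ) * n + 2) + 8 * Real.logb 2 ((n:ℝ) + 1) := by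
      push_cast
      rw [Real.logb_pow]
      have e1 : Real.logb 2 ((M:ℝ) * n + 1) ≤ Real.logb 2 ((M:ℝ) * n + 2) :=
        Real.logb_le_logb_of_le (by norm_num) (by positivity) (by linarith)
      have e2 : 0 ≤ Real.logb 2 ((M:ℝ) * n + 2) :=
        Real.logb_nonneg (by norm_num) (by linarith)
      have e3 : 0 ≤ Real.logb 2 ((n:ℝ) + 1) := by
        apply Real.logb_nonneg (by norm_num)
        have : (0:ℝ) ≤ (n:ℝ) := Nat.cast_nonneg n
        linarith
      have e4 : 0 ≤ Real.logb 2 ((M:ℝ) * n + 1) :=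
        Real.logb_nonneg (by norm_num) hMn1
      push_cast
      linarith
    beta_reduce at h1 h2 h3 h4 ⊢
    linarith
end

section
/- Let (X_j)_{j≥1} be a sequence of {0,1}-valued random variables that is stationary, i.e. (X_1,…,X_N) has the same joint distribution as (X_{j+1},…,X_{j+N}) for all j, N, and suppose that (1/t)∑_{j=1}^{t} X_j → p almost surely as t → ∞, for some p ∈ (0,1). Then for every ζ ∈ (0, 1/3) there exists γ ∈ (0, 1/2) such that, writing L_n = ⌊3ζn⌋, lim_{n→∞} P( for every i with 1 ≤ i ≤ n − L_n : γ·L_n ≤ ∑_{j=i}^{i+L_n−1} X_j ≤ (1−γ)·L_n ) = 1. That is, with probability tending to 1, every window of length L_n in (X_1,…,X_n) has an approximately balanced number of zeros and ones. -/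
open MeasureTheory ProbabilityTheory Filter Real
open scoped ENNReal NNReal

set_option maxHeartbeats 1600000

/-- Let `(X_j)_{j≥1}` be a stationary `{0,1}`-valued process whose empirical
averages `(1/t)∑_{j=1}^t X_j` converge a.s. to some `p ∈ (0,1)`. Then for every `ζ ∈ (0,1/3)`
there is `γ ∈ (0,1/2)` such that, with `L_n = ⌊3ζn⌋`, the probability that every window
`X_i,…,X_{i+L_n-1}` with `1 ≤ i ≤ n - L_n` has between `γL_n` and `(1-γ)L_n` ones tends
to `1`. -/
theorem stationary_process_balanced_windows
    {Ω : Type*} [MeasurableSpace Ω] (μ : Measure Ω) [IsProbabilityMeasure μ]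
    (X : ℕ → Ω → Bool) (hmeas : ∀ j, Measurable (X j))
    (hstat : ∀ j N : ℕ, ∀ v : Fin N → Bool,
      μ {ω | ∀ k : Fin N, X (j + 1 + (k : ℕ)) ω = v k} =
        μ {ω | ∀ k : Fin N, X (1 + (k : ℕ)) ω = v k})
    (p : ℝ) (hp : p ∈ Set.Ioo (0 : ℝ) 1)
    (hbirkhoff : ∀ᵐ ω ∂μ, Filter.Tendsto
      (fun t : ℕ => (∑ j ∈ Finset.Icc 1 t, (if X j ω then (1 : ℝ) else 0)) / t)
      Filter.atTop (nhds p))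
    (ζ : ℝ) (hζ : ζ ∈ Set.Ioo (0 : ℝ) (1/3)) :
    ∃ γ ∈ Set.Ioo (0 : ℝ) (1/2),
      Filter.Tendsto (fun n : ℕ =>
        (μ {ω | ∀ i : ℕ, 1 ≤ i → i ≤ n - ⌊3 * ζ * n⌋₊ →
          γ * ⌊3 * ζ * n⌋₊ ≤
              (∑ j ∈ Finset.Ico i (i + ⌊3 * ζ * n⌋₊), (if X j ω then (1 : ℝ) else 0)) ∧
          (∑ j ∈ Finset.Ico i (i + ⌊3 * ζ * n⌋₊), (if X j ω then (1 : ℝ) else 0)) ≤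
              (1 - γ) * ⌊3 * ζ * n⌋₊}).toReal)
        Filter.atTop (nhds 1) := by
  clear hstat
  obtain ⟨hp0, hp1⟩ := hp
  obtain ⟨hζ0, hζ3⟩ := hζ
  set γ : ℝ := min p (1 - p) / 2 with hγdef
  have hγ0 : 0 < γ := by
    have : 0 < min p (1 - p) := lt_min hp0 (by linarith)
    positivity
  have hγp : 2 * γ ≤ p := by
    have := min_le_left p (1 - p); simp only [hγdef]; linarith
  have hγq : 2 * γ ≤ 1 - p := by
    have := min_le_right p (1 - p); simp only [hγdef]; linarith
  have hγhalf : γ < 1 / 2 := by linarith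
  refine ⟨γ, ⟨hγ0, hγhalf⟩, ?_⟩
  set ε : ℝ := γ * ζ with hεdef
  have hε0 : 0 < ε := by positivity
  set f : ℕ → Ω → ℝ := fun j ω => if X j ω then 1 else 0 with hfdef
  set S : ℕ → Ω → ℝ := fun t ω => ∑ j ∈ Finset.Icc 1 t, f j ω with hSdef
  have hf01 : ∀ j ω, 0 ≤ f j ω ∧ f j ω ≤ 1 := by
    intro j ω; constructor <;> simp only [hfdef] <;> split <;> norm_num
  have hSbd : ∀ t ω, 0 ≤ S t ω ∧ S t ω ≤ t := by
    intro t ω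
    constructor
    · exact Finset.sum_nonneg fun j _ => (hf01 j ω).1
    · calc S t ω ≤ ∑ j ∈ Finset.Icc 1 t, (1 : ℝ) :=
            Finset.sum_le_sum fun j _ => (hf01 j ω).2
        _ = t := by simp
  set A : ℕ → Set Ω := fun N => {ω | ∀ t, N ≤ t → |S t ω - p * t| ≤ ε * t} with hAdef
  have hSmeas : ∀ t, Measurable (S t) := by
    intro t
    apply Finset.measurable_sum
    intro j _
    exact Measurable.ite (measurableSet_eq_fun (hmeas j) measurable_const)
      measurable_const measurable_const
  have hAmeas : ∀ N, MeasurableSet (A N) := by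
    intro N
    have : A N = ⋂ t, {ω | N ≤ t → |S t ω - p * t| ≤ ε * t} := by
      ext ω; simp [hAdef, Set.mem_iInter]
    rw [this]
    refine MeasurableSet.iInter fun t => ?_
    by_cases h : N ≤ t
    · simp only [h, true_implies]
      exact measurableSet_le (((hSmeas t).sub measurable_const).abs) measurable_const
    · simp [h]
  have hAmono : Monotone A := by
    intro N M hNM ω hω t ht
    exact hω t (le_trans hNM ht)
  have hAunion : μ (⋃ N, A N) = 1 := by
    have hae : ∀ᵐ ω ∂μ, ω ∈ ⋃ N, A N := by
      filter_upwards [hbirkhoff] with ω hω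
      obtain ⟨N, hN⟩ := (Metric.tendsto_atTop.mp hω ε hε0)
      refine Set.mem_iUnion.mpr ⟨N + 1, fun t ht => ?_⟩
      have ht1 : 1 ≤ t := le_trans (Nat.le_add_left 1 N) ht
      have htR : (0 : ℝ) < t := by exact_mod_cast ht1
      have h := hN t (by omega)
      rw [Real.dist_eq] at h
      have heq : S t ω - p * t = t * (S t ω / t - p) := by
        field_simp
      rw [heq, abs_mul, abs_of_pos htR]
      have : |S t ω / t - p| ≤ ε := le_of_lt h
      calc (t : ℝ) * |S t ω / t - p| ≤ t * ε := by
            exact mul_le_mul_of_nonneg_left this (le_of_lt htR)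
        _ = ε * t := mul_comm _ _
    have hcompl : μ (⋃ N, A N)ᶜ = 0 := by
      have h := ae_iff.mp hae
      rw [show (⋃ N, A N)ᶜ = {a | ¬ a ∈ ⋃ N, A N} from by ext a; simp [Set.mem_compl_iff]]
      exact h
    rw [← prob_compl_eq_zero_iff (MeasurableSet.iUnion hAmeas)]
    exact hcompl
  have hAtend : Tendsto (fun N => (μ (A N)).toReal) atTop (nhds 1) := by
    have h1 : Tendsto (fun N => μ (A N)) atTop (nhds 1) := by
      have := tendsto_measure_iUnion_atTop (μ := μ) hAmono
      rwa [hAunion] at this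
    exact (ENNReal.tendsto_toReal (by norm_num)).comp h1
  -- key inclusion
  have key : ∀ N : ℕ, ∀ᶠ n : ℕ in atTop, A N ⊆
      {ω | ∀ i : ℕ, 1 ≤ i → i ≤ n - ⌊3 * ζ * n⌋₊ →
        γ * ⌊3 * ζ * n⌋₊ ≤
            (∑ j ∈ Finset.Ico i (i + ⌊3 * ζ * n⌋₊), (if X j ω then (1 : ℝ) else 0)) ∧
        (∑ j ∈ Finset.Ico i (i + ⌊3 * ζ * n⌋₊), (if X j ω then (1 : ℝ) else 0)) ≤
            (1 - γ) * ⌊3 * ζ * n⌋₊} := by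
    intro N
    have htend : Tendsto (fun n : ℕ => γ * ζ * (n : ℝ)) atTop atTop :=
      Tendsto.const_mul_atTop (by positivity) tendsto_natCast_atTop_atTop
    have h1 : ∀ᶠ n : ℕ in atTop, γ + 2 * N + 1 ≤ γ * ζ * n :=
      htend.eventually_ge_atTop _
    filter_upwards [h1, eventually_ge_atTop 1] with n hn hn1
    intro ω hω i hi1 hile
    set L : ℕ := ⌊3 * ζ * n⌋₊ with hLdef
    -- basic facts about L
    have hLle : (L : ℝ) ≤ 3 * ζ * n := Nat.floor_le (by positivity)
    have hLgt : 3 * ζ * n - 1 < (L : ℝ) := by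
      have := Nat.lt_floor_add_one (3 * ζ * (n : ℝ)); linarith
    have hζn1 : 1 ≤ γ * ζ * n := by
      have : (0:ℝ) ≤ 2*N := by positivity
      linarith
    have hL1 : 1 ≤ L := by
      have hγle : γ ≤ 1 := by linarith
      have hn1' : (1:ℝ) ≤ (n:ℝ) := by exact_mod_cast hn1
      have : (1:ℝ) ≤ 3 * ζ * n := by nlinarith
      have : (0:ℕ) < L := by
        rw [hLdef]
        exact Nat.floor_pos.mpr this
      omega
    have hLn : L ≤ n := by
      have hn1' : (1:ℝ) ≤ (n:ℝ) := by exact_mod_cast hn1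
      have : (L : ℝ) ≤ (n : ℝ) := by nlinarith
      exact_mod_cast this
    have hiLn : i + L ≤ n := by omega
    -- window sum decomposition
    have hwin : (∑ j ∈ Finset.Ico i (i + L), f j ω) = S (i + L - 1) ω - S (i - 1) ω := by
      have e1 : Finset.Icc 1 (i - 1) = Finset.Ico 1 i := by
        ext j; simp [Finset.mem_Icc, Finset.mem_Ico]; omega
      have e2 : Finset.Icc 1 (i + L - 1) = Finset.Ico 1 (i + L) := by
        ext j; simp [Finset.mem_Icc, Finset.mem_Ico]; omega
      have := Finset.sum_Ico_consecutive (fun j => f j ω) hi1 (Nat.le_add_right i L)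
      simp only [hSdef, e1, e2]
      linarith [this]
    -- bound on partial sums
    have hbound : ∀ t : ℕ, t ≤ n → |S t ω - p * t| ≤ ε * n + N := by
      intro t htn
      by_cases ht : N ≤ t
      · have := hω t ht
        have htn' : (t : ℝ) ≤ n := by exact_mod_cast htn
        have : |S t ω - p * t| ≤ ε * t := this
        nlinarith [this, Nat.cast_nonneg (α := ℝ) N]
      · have := hSbd t ω
        have hpt : 0 ≤ p * t ∧ p * t ≤ t :=
          ⟨by positivity, by nlinarith [Nat.cast_nonneg (α := ℝ) t]⟩
        have : |S t ω - p * t| ≤ t := by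
          rw [abs_le]; constructor <;> linarith [this.1, this.2, hpt.1, hpt.2]
        have htN : (t : ℝ) ≤ N := by exact_mod_cast le_of_lt (not_le.mp ht)
        nlinarith [hε0, Nat.cast_nonneg (α := ℝ) n]
    have hb1 := hbound (i + L - 1) (by omega)
    have hb2 := hbound (i - 1) (by omega)
    have hc1 : ((i + L - 1 : ℕ) : ℝ) = (i : ℝ) + L - 1 := by
      have : (1:ℕ) ≤ i + L := by omega
      push_cast [Nat.cast_sub this]; ring
    have hc2 : ((i - 1 : ℕ) : ℝ) = (i : ℝ) - 1 := by
      push_cast [Nat.cast_sub hi1]; ring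
    rw [hc1] at hb1; rw [hc2] at hb2
    set W : ℝ := ∑ j ∈ Finset.Ico i (i + L), f j ω with hWdef
    have hWp : |W - p * L| ≤ 2 * (ε * n + N) := by
      have : W - p * L = (S (i + L - 1) ω - p * ((i:ℝ) + L - 1)) -
          (S (i - 1) ω - p * ((i:ℝ) - 1)) := by
        rw [hwin]; ring
      rw [this]
      refine le_trans (abs_sub _ _) ?_
      linarith
    have habs := abs_le.mp hWp
    have hεn : ε * (n : ℝ) = γ * ζ * n := by rw [hεdef]
    have hA' : γ * (3 * ζ * n - 1) ≤ γ * L :=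
      mul_le_mul_of_nonneg_left hLgt.le hγ0.le
    have hL0 : (0:ℝ) ≤ (L:ℝ) := Nat.cast_nonneg L
    constructor
    · show γ * (L : ℝ) ≤ W
      have hB : (0:ℝ) ≤ (p - 2 * γ) * L := mul_nonneg (by linarith) hL0
      nlinarith [habs.1]
    · show W ≤ (1 - γ) * (L : ℝ)
      have hB : (0:ℝ) ≤ (1 - p - 2 * γ) * L := mul_nonneg (by linarith) hL0
      nlinarith [habs.2]
  -- conclude
  rw [Metric.tendsto_atTop]
  intro δ hδ
  obtain ⟨N, hN⟩ := (Metric.tendsto_atTop.mp hAtend (δ / 2) (by linarith))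
  have hNs := hN N le_rfl
  rw [Real.dist_eq] at hNs
  have hAN : 1 - δ / 2 ≤ (μ (A N)).toReal := by
    have := abs_lt.mp hNs
    linarith [this.1]
  obtain ⟨n₀, hn₀⟩ := eventually_atTop.mp (key N)
  refine ⟨n₀, fun n hn => ?_⟩
  set E := {ω | ∀ i : ℕ, 1 ≤ i → i ≤ n - ⌊3 * ζ * n⌋₊ →
        γ * ⌊3 * ζ * n⌋₊ ≤
            (∑ j ∈ Finset.Ico i (i + ⌊3 * ζ * n⌋₊), (if X j ω then (1 : ℝ) else 0)) ∧
        (∑ j ∈ Finset.Ico i (i + ⌊3 * ζ * n⌋₊), (if X j ω then (1 : ℝ) else 0)) ≤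
            (1 - γ) * ⌊3 * ζ * n⌋₊} with hEdef
  have hsub : A N ⊆ E := hn₀ n hn
  have hle : (μ (A N)).toReal ≤ (μ E).toReal :=
    ENNReal.toReal_mono (measure_ne_top μ E) (measure_mono hsub)
  have hub : (μ E).toReal ≤ 1 := by
    have : μ E ≤ 1 := prob_le_one
    calc (μ E).toReal ≤ (1 : ℝ≥0∞).toReal := ENNReal.toReal_mono (by norm_num) this
      _ = 1 := by simp
  rw [Real.dist_eq, abs_lt]
  constructor
  · linarith
  · linarith
end
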